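/- Triviality of adhesive solutions with zero data: Let L, ρ, μ, T > 0 and let Φ satisfy assumption (A1), with the restriction of Φ to [−1,1] continuously differentiable up to the endpoints. Let u : [0,T]×[0,L] → ℝ be smooth (C² in t and C⁴ in x, with continuous mixed derivative ∂_t∂²ₓu) with |u(t,x)| ≤ 1 for all (t,x), satisfying ρ∂²_t u = −μ∂⁴ₓu − Φ'(u) on [0,T]×(0,L) (where Φ' denotes the derivative of Φ restricted to [−1,1]), the boundary conditions ∂²ₓu(t,0) = ∂²ₓu(t,L) = ∂³ₓu(t,0) = ∂³ₓu(t,L) = 0 for all t, and the zero initial conditions u(0,·) = 0 and ∂_t u(0,·) = 0. Then u ≡ 0 on [0,T]×[0,L]. -/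

import Mathlib

open MeasureTheory Filter Set intervalIntegral Real

/-- Assumption (A1) on the adhesive potential `Φ` with constant `κ`. -/
structure AdhesivePotential (Φ : ℝ → ℝ) (κ : ℝ) : Prop where
  continuous : Continuous Φ
  smooth : ContDiffOn ℝ 2 Φ ({1, -1} : Set ℝ)ᶜ
  nonneg : ∀ s, 0 ≤ Φ s
  const_left : ∀ s ≤ (-1 : ℝ), Φ s = Φ (-1)
  const_right : ∀ s ≥ (1 : ℝ), Φ s = Φ 1
  convexOn : ConvexOn ℝ (Set.Icc (-1 : ℝ) 1) Φ
  strictAntiOn : StrictAntiOn Φ (Set.Icc (-1 : ℝ) 0)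
  strictMonoOn : StrictMonoOn Φ (Set.Icc (0 : ℝ) 1)
  kappa_pos : 0 < κ
  quad_lower : ∀ s ∈ Set.Icc (-1 : ℝ) 1, κ * s ^ 2 ≤ Φ s

/-- The subdifferential of the (discontinuous) adhesive force `Φ'`:
`∂Φ'(s) = {Φ'(s)}` if `|s| < 1`, `{0}` if `|s| > 1`, `[0, Φ'(1⁻)]` if `s = 1` and
`[Φ'(-1⁺), 0]` if `s = -1`.  Since `Φ` is convex on `[-1,1]`, its derivative is monotone
there, so the one-sided limits `Φ'(1⁻)` and `Φ'(-1⁺)` coincide with the supremum and the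
infimum of `Φ'` over `(-1,1)`, respectively. -/
noncomputable def subdiffForce (Φ : ℝ → ℝ) (s : ℝ) : Set ℝ :=
  if |s| < 1 then {deriv Φ s}
  else if s = 1 then Set.Icc 0 (sSup (deriv Φ '' Set.Ioo (-1 : ℝ) 1))
  else if s = -1 then Set.Icc (sInf (deriv Φ '' Set.Ioo (-1 : ℝ) 1)) 0
  else {0}

/-- **Triviality of adhesive solutions with zero data.**
Let `L, ρ, μ, T > 0` and let `Φ` satisfy assumption (A1), with the restriction of `Φ` to
`[-1,1]` continuously differentiable up to the endpoints (with derivative `ψ`).  If `u` is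
a classical solution of `ρ ∂ₜ²u = -μ ∂ₓ⁴u - Φ'(u)` on `[0,T] × [0,L]` taking values in
`[-1,1]`, with free-end boundary conditions and zero initial data, then `u ≡ 0`. -/
theorem triviality_zero_data
    (L ρ μ T κ : ℝ) (hL : 0 < L) (hρ : 0 < ρ) (hμ : 0 < μ) (hT : 0 < T)
    (Φ : ℝ → ℝ) (hΦ : AdhesivePotential Φ κ)
    -- ψ is the derivative of the restriction of Φ to [-1,1], continuous up to ±1
    (ψ : ℝ → ℝ)
    (hψ : ∀ s ∈ Icc (-1:ℝ) 1, HasDerivWithinAt Φ (ψ s) (Icc (-1:ℝ) 1) s)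
    (hψc : ContinuousOn ψ (Icc (-1:ℝ) 1))
    (u ut utt ux uxx uxxx uxxxx utxx : ℝ → ℝ → ℝ)
    -- attached regime: |u| ≤ 1
    (hrange : ∀ t ∈ Icc 0 T, ∀ x ∈ Icc 0 L, |u t x| ≤ 1)
    -- time derivatives
    (hut : ∀ x ∈ Icc 0 L, ∀ t ∈ Icc 0 T, HasDerivAt (fun τ => u τ x) (ut t x) t)
    (hutt : ∀ x ∈ Icc 0 L, ∀ t ∈ Icc 0 T, HasDerivAt (fun τ => ut τ x) (utt t x) t)
    -- space derivatives
    (hux : ∀ t ∈ Icc 0 T, ∀ x ∈ Icc 0 L, HasDerivAt (fun y => u t y) (ux t x) x)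
    (huxx : ∀ t ∈ Icc 0 T, ∀ x ∈ Icc 0 L, HasDerivAt (fun y => ux t y) (uxx t x) x)
    (huxxx : ∀ t ∈ Icc 0 T, ∀ x ∈ Icc 0 L, HasDerivAt (fun y => uxx t y) (uxxx t x) x)
    (huxxxx : ∀ t ∈ Icc 0 T, ∀ x ∈ Icc 0 L, HasDerivAt (fun y => uxxx t y) (uxxxx t x) x)
    -- mixed derivative ∂ₜ∂ₓ²u
    (hutxx : ∀ x ∈ Icc 0 L, ∀ t ∈ Icc 0 T, HasDerivAt (fun τ => uxx τ x) (utxx t x) t)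
    -- continuity of the derivatives on [0,T] × [0,L]
    (hcont : ∀ v ∈ ({ut, utt, ux, uxx, uxxx, uxxxx, utxx} : Set (ℝ → ℝ → ℝ)),
      ContinuousOn (fun p : ℝ × ℝ => v p.1 p.2) (Icc 0 T ×ˢ Icc 0 L))
    -- the PDE ρ ∂ₜ²u = -μ ∂ₓ⁴u - Φ'(u) on [0,T] × (0,L)
    (hPDE : ∀ t ∈ Icc 0 T, ∀ x ∈ Ioo 0 L,
      ρ * utt t x = -μ * uxxxx t x - ψ (u t x))
    -- free-end boundary conditions
    (hBC : ∀ t ∈ Icc 0 T,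
      uxx t 0 = 0 ∧ uxx t L = 0 ∧ uxxx t 0 = 0 ∧ uxxx t L = 0)
    -- zero initial conditions
    (hu0 : ∀ x ∈ Icc 0 L, u 0 x = 0) (hut0 : ∀ x ∈ Icc 0 L, ut 0 x = 0) :
    ∀ t ∈ Icc 0 T, ∀ x ∈ Icc 0 L, u t x = 0 := by
  -- basic memberships and inclusions
  have h0T : (0:ℝ) ∈ Icc (0:ℝ) T := ⟨le_rfl, hT.le⟩
  have hIccL : Ioc (0:ℝ) L ⊆ Icc 0 L := Ioc_subset_Icc_self
  -- continuity of the given derivative fields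
  have hcut := hcont ut (by simp)
  have hcutt := hcont utt (by simp)
  have hcux := hcont ux (by simp)
  have hcuxx := hcont uxx (by simp)
  have hcuxxx := hcont uxxx (by simp)
  have hcuxxxx := hcont uxxxx (by simp)
  have hcutxx := hcont utxx (by simp)
  -- slice continuity
  have sliceT : ∀ v : ℝ → ℝ → ℝ,
      ContinuousOn (fun p : ℝ × ℝ => v p.1 p.2) (Icc 0 T ×ˢ Icc 0 L) →
      ∀ x ∈ Icc (0:ℝ) L, ContinuousOn (fun τ => v τ x) (Icc 0 T) := by
    intro v hv x hx
    have h : (fun τ => v τ x) = (fun p : ℝ × ℝ => v p.1 p.2) ∘ (fun τ => (τ, x)) := rfl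
    rw [h]
    exact hv.comp ((continuous_id.prodMk continuous_const).continuousOn)
      (fun τ hτ => ⟨hτ, hx⟩)
  have sliceX : ∀ v : ℝ → ℝ → ℝ,
      ContinuousOn (fun p : ℝ × ℝ => v p.1 p.2) (Icc 0 T ×ˢ Icc 0 L) →
      ∀ t ∈ Icc (0:ℝ) T, ContinuousOn (fun x => v t x) (Icc 0 L) := by
    intro v hv t ht
    have h : (fun x => v t x) = (fun p : ℝ × ℝ => v p.1 p.2) ∘ (fun x => (t, x)) := rfl
    rw [h]
    exact hv.comp ((continuous_const.prodMk continuous_id).continuousOn)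
      (fun x hx => ⟨ht, hx⟩)
  have hu_contX : ∀ t ∈ Icc (0:ℝ) T, ContinuousOn (fun x => u t x) (Icc 0 L) :=
    fun t ht x hx => (hux t ht x hx).continuousAt.continuousWithinAt
  have hu_contT : ∀ x ∈ Icc (0:ℝ) L, ContinuousOn (fun τ => u τ x) (Icc 0 T) :=
    fun x hx t ht => (hut x hx t ht).continuousAt.continuousWithinAt
  have hmem : ∀ t ∈ Icc (0:ℝ) T, ∀ x ∈ Icc (0:ℝ) L, u t x ∈ Icc (-1:ℝ) 1 := by
    intro t ht x hx
    have h := abs_le.mp (hrange t ht x hx)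
    exact ⟨h.1, h.2⟩
  -- interval integrability helpers
  have hiiX : ∀ f : ℝ → ℝ, ContinuousOn f (Icc 0 L) → IntervalIntegrable f volume 0 L := by
    intro f hf
    apply ContinuousOn.intervalIntegrable
    rwa [uIcc_of_le hL.le]
  have hiiT : ∀ s ∈ Icc (0:ℝ) T, ∀ f : ℝ → ℝ, ContinuousOn f (Icc 0 T) →
      IntervalIntegrable f volume 0 s := by
    intro s hs f hf
    apply ContinuousOn.intervalIntegrable
    rw [uIcc_of_le hs.1]
    exact hf.mono (Icc_subset_Icc le_rfl hs.2)
  -- uniform bounds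
  have hbdd : ∀ v : ℝ → ℝ → ℝ,
      ContinuousOn (fun p : ℝ × ℝ => v p.1 p.2) (Icc 0 T ×ˢ Icc 0 L) →
      ∃ C : ℝ, 0 ≤ C ∧ ∀ t ∈ Icc (0:ℝ) T, ∀ x ∈ Icc (0:ℝ) L, |v t x| ≤ C := by
    intro v hv
    obtain ⟨C, hC⟩ := (isCompact_Icc.prod isCompact_Icc).exists_bound_of_continuousOn hv
    refine ⟨max C 0, le_max_right _ _, fun t ht x hx => ?_⟩
    have h := hC (t, x) ⟨ht, hx⟩
    rw [Real.norm_eq_abs] at h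
    exact h.trans (le_max_left _ _)
  -- the initial spatial derivatives vanish
  have hux0 : ∀ x ∈ Icc (0:ℝ) L, ux 0 x = 0 := by
    intro x hx
    have h1 : HasDerivWithinAt (fun y => u 0 y) (ux 0 x) (Icc 0 L) x :=
      (hux 0 h0T x hx).hasDerivWithinAt
    have h2 : HasDerivWithinAt (fun y => u 0 y) 0 (Icc 0 L) x :=
      (hasDerivWithinAt_const x (Icc 0 L) (0:ℝ)).congr (fun y hy => hu0 y hy) (hu0 x hx)
    have hud := uniqueDiffOn_Icc hL x hx
    rw [← h1.derivWithin hud, h2.derivWithin hud]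
  have huxx0 : ∀ x ∈ Icc (0:ℝ) L, uxx 0 x = 0 := by
    intro x hx
    have h1 : HasDerivWithinAt (fun y => ux 0 y) (uxx 0 x) (Icc 0 L) x :=
      (huxx 0 h0T x hx).hasDerivWithinAt
    have h2 : HasDerivWithinAt (fun y => ux 0 y) 0 (Icc 0 L) x :=
      (hasDerivWithinAt_const x (Icc 0 L) (0:ℝ)).congr (fun y hy => hux0 y hy) (hux0 x hx)
    have hud := uniqueDiffOn_Icc hL x hx
    rw [← h1.derivWithin hud, h2.derivWithin hud]
  -- Φ attains its minimum on [-1,1] at 0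
  have hΦ0 : ∀ v ∈ Icc (-1:ℝ) 1, Φ 0 ≤ Φ v := by
    intro v hv
    rcases le_or_gt v 0 with h | h
    · rcases eq_or_lt_of_le h with h' | h'
      · rw [h']
      · exact (hΦ.strictAntiOn ⟨hv.1, h⟩ ⟨by norm_num, le_rfl⟩ h').le
    · exact (hΦ.strictMonoOn ⟨le_rfl, zero_le_one⟩ ⟨h.le, hv.2⟩ h).le
  -- integration by parts twice in space
  have hparts : ∀ τ ∈ Icc (0:ℝ) T, ∀ t ∈ Icc (0:ℝ) T,
      (∫ x in (0:ℝ)..L, u τ x * uxxxx t x) = ∫ x in (0:ℝ)..L, uxx τ x * uxx t x := by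
    intro τ hτ t ht
    obtain ⟨hbc1, hbc2, hbc3, hbc4⟩ := hBC t ht
    have huI : ∀ x ∈ uIcc (0:ℝ) L, x ∈ Icc (0:ℝ) L := by
      intro x hx
      rwa [uIcc_of_le hL.le] at hx
    have h1 : (∫ x in (0:ℝ)..L, u τ x * uxxxx t x)
        = u τ L * uxxx t L - u τ 0 * uxxx t 0 - ∫ x in (0:ℝ)..L, ux τ x * uxxx t x := by
      apply intervalIntegral.integral_mul_deriv_eq_deriv_mul
      · exact fun x hx => hux τ hτ x (huI x hx)
      · exact fun x hx => huxxxx t ht x (huI x hx)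
      · exact hiiX _ (sliceX ux hcux τ hτ)
      · exact hiiX _ (sliceX uxxxx hcuxxxx t ht)
    have h2 : (∫ x in (0:ℝ)..L, ux τ x * uxxx t x)
        = ux τ L * uxx t L - ux τ 0 * uxx t 0 - ∫ x in (0:ℝ)..L, uxx τ x * uxx t x := by
      apply intervalIntegral.integral_mul_deriv_eq_deriv_mul
      · exact fun x hx => huxx τ hτ x (huI x hx)
      · exact fun x hx => huxxx t ht x (huI x hx)
      · exact hiiX _ (sliceX uxx hcuxx τ hτ)
      · exact hiiX _ (sliceX uxxx hcuxxx t ht)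
    rw [h1, h2, hbc1, hbc2, hbc3, hbc4]
    ring
  -- the mixed-derivative integral identity at interior times
  have hswap : ∀ t ∈ Ioo (0:ℝ) T,
      (∫ x in (0:ℝ)..L, ut t x * uxxxx t x) = ∫ x in (0:ℝ)..L, utxx t x * uxx t x := by
    intro t ht
    have htI : t ∈ Icc (0:ℝ) T := ⟨ht.1.le, ht.2.le⟩
    have hε : (0:ℝ) < min t (T - t) := lt_min ht.1 (sub_pos.mpr ht.2)
    have hball : Metric.ball t (min t (T - t)) ⊆ Icc (0:ℝ) T := by
      intro τ hτ
      rw [Real.ball_eq_Ioo] at hτ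
      have h1 := min_le_left t (T - t)
      have h2 := min_le_right t (T - t)
      exact ⟨by linarith [hτ.1], by linarith [hτ.2]⟩
    have hIccN : Icc (0:ℝ) T ∈ nhds t := Icc_mem_nhds ht.1 ht.2
    obtain ⟨C1, hC1n, hC1⟩ := hbdd ut hcut
    obtain ⟨C2, hC2n, hC2⟩ := hbdd uxxxx hcuxxxx
    obtain ⟨C3, hC3n, hC3⟩ := hbdd utxx hcutxx
    obtain ⟨C4, hC4n, hC4⟩ := hbdd uxx hcuxx
    have hIoc : Set.uIoc (0:ℝ) L = Ioc 0 L := uIoc_of_le hL.le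
    have HA := intervalIntegral.hasDerivAt_integral_of_dominated_loc_of_deriv_le
      (F := fun τ x => u τ x * uxxxx t x) (F' := fun τ x => ut τ x * uxxxx t x)
      (x₀ := t) (a := (0:ℝ)) (b := L) (bound := fun _ => C1 * C2) (Metric.ball_mem_nhds t hε)
      (by
        apply Filter.eventually_of_mem hIccN
        intro τ hτ
        rw [hIoc]
        exact (((hu_contX τ hτ).mul (sliceX uxxxx hcuxxxx t htI)).mono hIccL).aestronglyMeasurable
          measurableSet_Ioc)
      (hiiX _ ((hu_contX t htI).mul (sliceX uxxxx hcuxxxx t htI)))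
      (by
        rw [hIoc]
        exact (((sliceX ut hcut t htI).mul (sliceX uxxxx hcuxxxx t htI)).mono hIccL).aestronglyMeasurable
          measurableSet_Ioc)
      (by
        apply Filter.Eventually.of_forall
        intro x hx τ hτ
        have hxI : x ∈ Icc (0:ℝ) L := hIccL (hIoc ▸ hx)
        rw [Real.norm_eq_abs, abs_mul]
        exact mul_le_mul (hC1 τ (hball hτ) x hxI) (hC2 t htI x hxI) (abs_nonneg _) hC1n)
      intervalIntegrable_const
      (by
        apply Filter.Eventually.of_forall
        intro x hx τ hτ
        have hxI : x ∈ Icc (0:ℝ) L := hIccL (hIoc ▸ hx)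
        exact (hut x hxI τ (hball hτ)).mul_const _)
    have HB := intervalIntegral.hasDerivAt_integral_of_dominated_loc_of_deriv_le
      (F := fun τ x => uxx τ x * uxx t x) (F' := fun τ x => utxx τ x * uxx t x)
      (x₀ := t) (a := (0:ℝ)) (b := L) (bound := fun _ => C3 * C4) (Metric.ball_mem_nhds t hε)
      (by
        apply Filter.eventually_of_mem hIccN
        intro τ hτ
        rw [hIoc]
        exact (((sliceX uxx hcuxx τ hτ).mul (sliceX uxx hcuxx t htI)).mono hIccL).aestronglyMeasurable
          measurableSet_Ioc)
      (hiiX _ ((sliceX uxx hcuxx t htI).mul (sliceX uxx hcuxx t htI)))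
      (by
        rw [hIoc]
        exact (((sliceX utxx hcutxx t htI).mul (sliceX uxx hcuxx t htI)).mono hIccL).aestronglyMeasurable
          measurableSet_Ioc)
      (by
        apply Filter.Eventually.of_forall
        intro x hx τ hτ
        have hxI : x ∈ Icc (0:ℝ) L := hIccL (hIoc ▸ hx)
        rw [Real.norm_eq_abs, abs_mul]
        exact mul_le_mul (hC3 τ (hball hτ) x hxI) (hC4 t htI x hxI) (abs_nonneg _) hC3n)
      intervalIntegrable_const
      (by
        apply Filter.Eventually.of_forall
        intro x hx τ hτ
        have hxI : x ∈ Icc (0:ℝ) L := hIccL (hIoc ▸ hx)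
        exact (hutxx x hxI τ (hball hτ)).mul_const _)
    have hEv : (fun τ => ∫ x in (0:ℝ)..L, u τ x * uxxxx t x)
        =ᶠ[nhds t] (fun τ => ∫ x in (0:ℝ)..L, uxx τ x * uxx t x) :=
      Filter.eventually_of_mem hIccN (fun τ hτ => hparts τ hτ t htI)
    exact HA.2.unique (HB.2.congr_of_eventuallyEq hEv)
  -- Fubini on the rectangle
  have hfub : ∀ s ∈ Icc (0:ℝ) T, ∀ f : ℝ → ℝ → ℝ,
      ContinuousOn (fun p : ℝ × ℝ => f p.1 p.2) (Icc 0 T ×ˢ Icc 0 L) →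
      (∫ x in (0:ℝ)..L, ∫ τ in (0:ℝ)..s, f τ x) = ∫ τ in (0:ℝ)..s, ∫ x in (0:ℝ)..L, f τ x := by
    intro s hs f hf
    have hg : ContinuousOn (fun p : ℝ × ℝ => f p.2 p.1) (Icc 0 L ×ˢ Icc 0 s) := by
      have h : (fun p : ℝ × ℝ => f p.2 p.1) = (fun p : ℝ × ℝ => f p.1 p.2) ∘ Prod.swap := rfl
      rw [h]
      exact hf.comp continuous_swap.continuousOn
        (fun p hp => ⟨Icc_subset_Icc le_rfl hs.2 hp.2, hp.1⟩)
    have hint : Integrable (Function.uncurry fun x τ => f τ x)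
        ((volume.restrict (Ioc (0:ℝ) L)).prod (volume.restrict (Ioc (0:ℝ) s))) := by
      rw [Measure.prod_restrict]
      exact (hg.integrableOn_compact (isCompact_Icc.prod isCompact_Icc)).mono_set
        (prod_mono Ioc_subset_Icc_self Ioc_subset_Icc_self)
    simp only [intervalIntegral.integral_of_le hL.le, intervalIntegral.integral_of_le hs.1]
    exact MeasureTheory.integral_integral_swap hint
  -- the key step: the velocity vanishes identically
  have hkey : ∀ s ∈ Icc (0:ℝ) T, ∀ x ∈ Icc (0:ℝ) L, ut s x = 0 := by
    intro s hs
    have hsub : Icc (0:ℝ) s ⊆ Icc 0 T := Icc_subset_Icc le_rfl hs.2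
    have huI : ∀ τ ∈ uIcc (0:ℝ) s, τ ∈ Icc (0:ℝ) T := by
      intro τ hτ
      rw [uIcc_of_le hs.1] at hτ
      exact hsub hτ
    have claim1 : ∀ x ∈ Ioo (0:ℝ) L,
        ρ/2 * ut s x ^ 2 + μ/2 * uxx s x ^ 2 + (Φ (u s x) - Φ 0)
          = ∫ τ in (0:ℝ)..s, μ * (uxx τ x * utxx τ x - ut τ x * uxxxx τ x) := by
      intro x hxo
      have hx : x ∈ Icc (0:ℝ) L := Ioo_subset_Icc_self hxo
      have hint1 : IntervalIntegrable (fun τ => ρ * (ut τ x * utt τ x)) volume 0 s :=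
        hiiT s hs _ (continuousOn_const.mul
          ((sliceT ut hcut x hx).mul (sliceT utt hcutt x hx)))
      have hint2 : IntervalIntegrable (fun τ => μ * (uxx τ x * utxx τ x)) volume 0 s :=
        hiiT s hs _ (continuousOn_const.mul
          ((sliceT uxx hcuxx x hx).mul (sliceT utxx hcutxx x hx)))
      have hint3 : IntervalIntegrable (fun τ => ψ (u τ x) * ut τ x) volume 0 s :=
        hiiT s hs _ (((hψc.comp (hu_contT x hx) (fun σ hσ => hmem σ hσ x hx))).mul
          (sliceT ut hcut x hx))
      have I1 : (∫ τ in (0:ℝ)..s, ρ * (ut τ x * utt τ x))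
          = ρ/2 * ut s x ^ 2 - ρ/2 * ut 0 x ^ 2 := by
        apply intervalIntegral.integral_eq_sub_of_hasDerivAt _ hint1
        intro τ hτ
        have h := ((hutt x hx τ (huI τ hτ)).fun_pow 2).const_mul (ρ/2)
        convert h using 1
        · rfl
        · push_cast
          ring
      have I2 : (∫ τ in (0:ℝ)..s, μ * (uxx τ x * utxx τ x))
          = μ/2 * uxx s x ^ 2 - μ/2 * uxx 0 x ^ 2 := by
        apply intervalIntegral.integral_eq_sub_of_hasDerivAt _ hint2
        intro τ hτ
        have h := ((hutxx x hx τ (huI τ hτ)).fun_pow 2).const_mul (μ/2)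
        convert h using 1
        · rfl
        · push_cast
          ring
      have I3 : (∫ τ in (0:ℝ)..s, ψ (u τ x) * ut τ x) = Φ (u s x) - Φ (u 0 x) := by
        apply intervalIntegral.integral_eq_sub_of_hasDeriv_right_of_le hs.1
          (hΦ.continuous.comp_continuousOn ((hu_contT x hx).mono hsub)) _ hint3
        intro τ hτo
        have hτ : τ ∈ Icc (0:ℝ) T := ⟨hτo.1.le, (hτo.2.trans_le hs.2).le⟩
        have hc : HasDerivWithinAt (fun τ => Φ (u τ x)) (ψ (u τ x) * ut τ x) (Icc 0 T) τ :=
          (hψ (u τ x) (hmem τ hτ x hx)).comp τ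
            (hut x hx τ hτ).hasDerivWithinAt (fun σ hσ => hmem σ hσ x hx)
        exact (hc.hasDerivAt (Icc_mem_nhds hτo.1 (hτo.2.trans_le hs.2))).hasDerivWithinAt
      have hEq : (∫ τ in (0:ℝ)..s, μ * (uxx τ x * utxx τ x - ut τ x * uxxxx τ x))
          = ∫ τ in (0:ℝ)..s,
              (ρ * (ut τ x * utt τ x) + μ * (uxx τ x * utxx τ x) + ψ (u τ x) * ut τ x) := by
        apply intervalIntegral.integral_congr
        intro τ hτ
        have hp := hPDE τ (huI τ hτ) x hxo
        show μ * (uxx τ x * utxx τ x - ut τ x * uxxxx τ x)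
          = ρ * (ut τ x * utt τ x) + μ * (uxx τ x * utxx τ x) + ψ (u τ x) * ut τ x
        linear_combination (- ut τ x) * hp
      rw [hEq, intervalIntegral.integral_add (hint1.add hint2) hint3,
        intervalIntegral.integral_add hint1 hint2, I1, I2, I3, hu0 x hx, hut0 x hx,
        huxx0 x hx]
      ring
    have ql : ContinuousOn (fun p : ℝ × ℝ =>
        μ * (uxx p.1 p.2 * utxx p.1 p.2 - ut p.1 p.2 * uxxxx p.1 p.2))
        (Icc 0 T ×ˢ Icc 0 L) :=
      continuousOn_const.mul ((hcuxx.mul hcutxx).sub (hcut.mul hcuxxxx))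
    have eq1 : (∫ x in (0:ℝ)..L,
          (ρ/2 * ut s x ^ 2 + μ/2 * uxx s x ^ 2 + (Φ (u s x) - Φ 0)))
        = ∫ x in (0:ℝ)..L, ∫ τ in (0:ℝ)..s,
            μ * (uxx τ x * utxx τ x - ut τ x * uxxxx τ x) := by
      apply intervalIntegral.integral_congr_ae
      have hLn : (volume : Measure ℝ) {L} = 0 := measure_singleton L
      filter_upwards [compl_mem_ae_iff.mpr hLn] with x hxL hxI
      rw [uIoc_of_le hL.le] at hxI
      exact claim1 x ⟨hxI.1, lt_of_le_of_ne hxI.2 hxL⟩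
    have eq2 := hfub s hs (fun τ x => μ * (uxx τ x * utxx τ x - ut τ x * uxxxx τ x)) ql
    have eq3 : ∀ τ ∈ Ioo (0:ℝ) T,
        (∫ x in (0:ℝ)..L, μ * (uxx τ x * utxx τ x - ut τ x * uxxxx τ x)) = 0 := by
      intro τ hτ
      have hτI : τ ∈ Icc (0:ℝ) T := ⟨hτ.1.le, hτ.2.le⟩
      have hsubint : (∫ x in (0:ℝ)..L, (uxx τ x * utxx τ x - ut τ x * uxxxx τ x))
          = (∫ x in (0:ℝ)..L, uxx τ x * utxx τ x)
            - ∫ x in (0:ℝ)..L, ut τ x * uxxxx τ x :=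
        intervalIntegral.integral_sub
          (hiiX _ ((sliceX uxx hcuxx τ hτI).mul (sliceX utxx hcutxx τ hτI)))
          (hiiX _ ((sliceX ut hcut τ hτI).mul (sliceX uxxxx hcuxxxx τ hτI)))
      have hcomm : (∫ x in (0:ℝ)..L, uxx τ x * utxx τ x)
          = ∫ x in (0:ℝ)..L, utxx τ x * uxx τ x := by
        apply intervalIntegral.integral_congr
        intro x hx
        exact mul_comm _ _
      rw [intervalIntegral.integral_const_mul, hsubint, hswap τ hτ, hcomm]
      ring
    have eq4 : (∫ τ in (0:ℝ)..s, ∫ x in (0:ℝ)..L,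
        μ * (uxx τ x * utxx τ x - ut τ x * uxxxx τ x)) = 0 := by
      have h : (∫ τ in (0:ℝ)..s, ∫ x in (0:ℝ)..L,
          μ * (uxx τ x * utxx τ x - ut τ x * uxxxx τ x))
          = ∫ τ in (0:ℝ)..s, (0:ℝ) := by
        apply intervalIntegral.integral_congr_ae
        have hsn : (volume : Measure ℝ) {s} = 0 := measure_singleton s
        filter_upwards [compl_mem_ae_iff.mpr hsn] with τ hτs hτI
        rw [uIoc_of_le hs.1] at hτI
        exact eq3 τ ⟨hτI.1, lt_of_lt_of_le (lt_of_le_of_ne hτI.2 hτs) hs.2⟩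
      rw [h]
      simp
    have Etot : (∫ x in (0:ℝ)..L,
        (ρ/2 * ut s x ^ 2 + μ/2 * uxx s x ^ 2 + (Φ (u s x) - Φ 0))) = 0 := by
      rw [eq1, eq2, eq4]
    have hc1 : ContinuousOn (fun x => ρ/2 * ut s x ^ 2) (Icc 0 L) :=
      continuousOn_const.mul ((sliceX ut hcut s hs).pow 2)
    have hc2 : ContinuousOn (fun x => μ/2 * uxx s x ^ 2) (Icc 0 L) :=
      continuousOn_const.mul ((sliceX uxx hcuxx s hs).pow 2)
    have hc3 : ContinuousOn (fun x => Φ (u s x) - Φ 0) (Icc 0 L) :=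
      (hΦ.continuous.comp_continuousOn (hu_contX s hs)).sub continuousOn_const
    have hn2 : 0 ≤ ∫ x in (0:ℝ)..L, μ/2 * uxx s x ^ 2 :=
      intervalIntegral.integral_nonneg hL.le (fun x hx => by positivity)
    have hn3 : 0 ≤ ∫ x in (0:ℝ)..L, (Φ (u s x) - Φ 0) :=
      intervalIntegral.integral_nonneg hL.le
        (fun x hx => sub_nonneg.mpr (hΦ0 _ (hmem s hs x hx)))
    have hn1 : 0 ≤ ∫ x in (0:ℝ)..L, ρ/2 * ut s x ^ 2 :=
      intervalIntegral.integral_nonneg hL.le (fun x hx => by positivity)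
    have h1z : (∫ x in (0:ℝ)..L, ρ/2 * ut s x ^ 2) = 0 := by
      have hsplit := Etot
      rw [intervalIntegral.integral_add ((hiiX _ hc1).add (hiiX _ hc2)) (hiiX _ hc3),
        intervalIntegral.integral_add (hiiX _ hc1) (hiiX _ hc2)] at hsplit
      linarith
    have h2z : (∫ x in (0:ℝ)..L, ut s x ^ 2) = 0 := by
      rw [intervalIntegral.integral_const_mul] at h1z
      have hρ2 : (ρ/2) ≠ 0 := by positivity
      exact (mul_eq_zero.mp h1z).resolve_left hρ2
    have hcsq : ContinuousOn (fun x => ut s x ^ 2) (Icc 0 L) := (sliceX ut hcut s hs).pow 2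
    have hintsq : IntegrableOn (fun x => ut s x ^ 2) (Ioc (0:ℝ) L) volume :=
      (hcsq.integrableOn_compact isCompact_Icc).mono_set Ioc_subset_Icc_self
    have hae : (fun x => ut s x ^ 2) =ᵐ[volume.restrict (Ioc (0:ℝ) L)] 0 := by
      have hnn : 0 ≤ᵐ[volume.restrict (Ioc (0:ℝ) L)] (fun x => ut s x ^ 2) :=
        Filter.Eventually.of_forall (fun x => sq_nonneg _)
      apply (MeasureTheory.integral_eq_zero_iff_of_nonneg_ae hnn hintsq).mp
      rw [← intervalIntegral.integral_of_le hL.le]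
      exact h2z
    have haeIcc : (fun x => ut s x ^ 2) =ᵐ[volume.restrict (Icc (0:ℝ) L)] 0 := by
      rwa [Measure.restrict_congr_set Ioc_ae_eq_Icc] at hae
    have hclos : Icc (0:ℝ) L ⊆ closure (interior (Icc (0:ℝ) L)) := by
      rw [interior_Icc, closure_Ioo hL.ne]
    have hEqOn := MeasureTheory.Measure.eqOn_of_ae_eq haeIcc hcsq continuousOn_const hclos
    intro x hx
    have h := hEqOn hx
    simpa using (pow_eq_zero_iff two_ne_zero).mp h
  -- conclude by integrating the velocity in time
  intro t ht x hx
  have hFTC : (∫ τ in (0:ℝ)..t, ut τ x) = u t x - u 0 x := by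
    apply intervalIntegral.integral_eq_sub_of_hasDerivAt
    · intro τ hτ
      rw [uIcc_of_le ht.1] at hτ
      exact hut x hx τ (Icc_subset_Icc le_rfl ht.2 hτ)
    · exact hiiT t ht _ (sliceT ut hcut x hx)
  have hz : (∫ τ in (0:ℝ)..t, ut τ x) = 0 := by
    have h : EqOn (fun τ => ut τ x) (fun _ => (0:ℝ)) (uIcc (0:ℝ) t) := by
      intro τ hτ
      rw [uIcc_of_le ht.1] at hτ
      exact hkey τ (Icc_subset_Icc le_rfl ht.2 hτ) x hx
    rw [intervalIntegral.integral_congr h]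
    simp
  rw [hFTC, hu0 x hx, sub_zero] at hz
  exact hz
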